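/- The value of the correlation maximization problem with mean-independence constraint, sup{𝔼(V·Y) : Law(V)=uniform on [0,1], 𝔼(X|V)=0}, coincides with sup{𝔼(∫₀¹ U_t Y dt)} taken over families (U_t)_{t∈[0,1]} of random variables such that t↦U_t is nonincreasing, U_t takes values in {0,1}, 𝔼(U_t) = 1−t, and 𝔼(U_t X) = 0 for every t. -/

import Mathlib

open MeasureTheory ProbabilityTheory Set
open scoped RealInnerProductSpace

noncomputable section

/-- The value of the correlation maximization problem with mean-independence
constraint, `sup { 𝔼(V·Y) : Law(V) = uniform[0,1], 𝔼(X|V) = 0 }`, coincides with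
`sup 𝔼(∫₀¹ U_t Y dt)` over families `(U_t)` with `t ↦ U_t` nonincreasing, `U_t ∈ {0,1}`,
`𝔼(U_t) = 1 − t` and `𝔼(U_t X) = 0` for every `t ∈ [0,1]`. -/
theorem correlation_maximization_eq_monotone_indicator_families
    {Ωs : Type*} [MeasurableSpace Ωs] (P : Measure Ωs) [IsProbabilityMeasure P]
    {N : ℕ}
    (X : Ωs → EuclideanSpace ℝ (Fin N)) (Y : Ωs → ℝ)
    (hX : Measurable X) (hY : Measurable Y)
    (hXbdd : ∃ C : ℝ, ∀ ω, ‖X ω‖ ≤ C) (hYbdd : ∃ C : ℝ, ∀ ω, |Y ω| ≤ C)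
    (hXcentered : ∫ ω, X ω ∂P = 0) :
    sSup {r : ℝ | ∃ V : Ωs → ℝ, Measurable V ∧
      Measure.map V P = volume.restrict (Icc (0:ℝ) 1) ∧
      P[X | MeasurableSpace.comap V inferInstance] =ᵐ[P] 0 ∧
      r = ∫ ω, V ω * Y ω ∂P} =
    sSup {r : ℝ | ∃ U : ℝ → Ωs → ℝ,
      Measurable (Function.uncurry U) ∧
      (∀ ω, AntitoneOn (fun t => U t ω) (Icc (0:ℝ) 1)) ∧
      (∀ t ∈ Icc (0:ℝ) 1, ∀ ω, U t ω = 0 ∨ U t ω = 1) ∧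
      (∀ t ∈ Icc (0:ℝ) 1, ∫ ω, U t ω ∂P = 1 - t) ∧
      (∀ t ∈ Icc (0:ℝ) 1, ∫ ω, U t ω • X ω ∂P = 0) ∧
      r = ∫ ω, (∫ t in (0:ℝ)..1, U t ω * Y ω) ∂P} := by
  obtain ⟨CX, hCX⟩ := hXbdd
  have intX : Integrable X P := by
    refine (integrable_const CX).mono' hX.aestronglyMeasurable ?_
    exact Filter.Eventually.of_forall hCX
  congr 1
  apply Set.eq_of_subset_of_subset
  · -- direction 1
    rintro r ⟨V, hVmeas, hVlaw, hVce, rfl⟩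
    have hm : MeasurableSpace.comap V inferInstance ≤ (inferInstance : MeasurableSpace Ωs) :=
      hVmeas.comap_le
    haveI : SigmaFinite (P.trim hm) := by
      have : IsFiniteMeasure (P.trim hm) := isFiniteMeasure_trim hm
      infer_instance
    refine ⟨fun t ω => if t < V ω then 1 else 0, ?_, ?_, ?_, ?_, ?_, ?_⟩
    · exact Measurable.ite (measurableSet_lt measurable_fst (hVmeas.comp measurable_snd))
        measurable_const measurable_const
    · intro ω a _ b _ hab
      by_cases hb : b < V ω
      · simp [hb, lt_of_le_of_lt hab hb]
      · simp only [if_neg hb]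
        split_ifs <;> norm_num
    · intro t _ ω
      by_cases h : t < V ω
      · exact Or.inr (by simp [h])
      · exact Or.inl (by simp [h])
    · intro t ht
      have heq : (fun ω => if t < V ω then (1:ℝ) else 0) = (V ⁻¹' Ioi t).indicator 1 := by
        funext ω
        by_cases h : t < V ω <;> simp [Set.indicator, h]
      rw [heq, integral_indicator_one (hVmeas measurableSet_Ioi)]
      have : P (V ⁻¹' Ioi t) = Measure.map V P (Ioi t) :=
        (Measure.map_apply hVmeas measurableSet_Ioi).symm
      rw [measureReal_def, this, hVlaw, Measure.restrict_apply measurableSet_Ioi]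
      have hset : Ioi t ∩ Icc (0:ℝ) 1 = Ioc t 1 := by
        ext x
        simp only [mem_inter_iff, mem_Ioi, mem_Icc, mem_Ioc]
        constructor
        · rintro ⟨h1, _, h3⟩; exact ⟨h1, h3⟩
        · rintro ⟨h1, h2⟩; exact ⟨h1, le_trans ht.1 h1.le, h2⟩
      rw [hset, Real.volume_Ioc, ENNReal.toReal_ofReal (by linarith [ht.2])]
    · intro t _
      have heq : (fun ω => (if t < V ω then (1:ℝ) else 0) • X ω)
          = (V ⁻¹' Ioi t).indicator X := by
        funext ω
        by_cases h : t < V ω <;> simp [Set.indicator, h]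
      rw [heq, integral_indicator (hVmeas measurableSet_Ioi)]
      have hs : MeasurableSet[MeasurableSpace.comap V inferInstance] (V ⁻¹' Ioi t) :=
        ⟨Ioi t, measurableSet_Ioi, rfl⟩
      rw [← setIntegral_condExp hm intX hs]
      calc ∫ ω in V ⁻¹' Ioi t, (P[X|MeasurableSpace.comap V inferInstance]) ω ∂P
          = ∫ ω in V ⁻¹' Ioi t, (0 : EuclideanSpace ℝ (Fin N)) ∂P := by
            refine setIntegral_congr_ae (hVmeas measurableSet_Ioi) ?_
            filter_upwards [hVce] with ω h _ using h
        _ = 0 := integral_zero _ _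
    · have hae : ∀ᵐ ω ∂P, V ω ∈ Icc (0:ℝ) 1 := by
        have h0 : P (V ⁻¹' (Icc (0:ℝ) 1)ᶜ) = 0 := by
          rw [← Measure.map_apply hVmeas measurableSet_Icc.compl, hVlaw,
            Measure.restrict_apply measurableSet_Icc.compl, Set.compl_inter_self, measure_empty]
        exact ae_iff.mpr h0
      refine integral_congr_ae ?_
      filter_upwards [hae] with ω hω
      have h1 : (∫ t in (0:ℝ)..1, (if t < V ω then (1:ℝ) else 0) * Y ω)
          = (∫ t in (0:ℝ)..1, if t < V ω then (1:ℝ) else 0) * Y ω :=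
        intervalIntegral.integral_mul_const _ _
      rw [h1]
      have h2 : (∫ t in (0:ℝ)..1, if t < V ω then (1:ℝ) else 0) = V ω := by
        rw [intervalIntegral.integral_of_le zero_le_one]
        have heq : (fun t => if t < V ω then (1:ℝ) else 0) = (Iio (V ω)).indicator 1 := by
          funext t
          by_cases h : t < V ω <;> simp [Set.indicator, h]
        rw [heq, setIntegral_indicator measurableSet_Iio]
        have hset : Ioc (0:ℝ) 1 ∩ Iio (V ω) = Ioo 0 (V ω) := by
          ext x
          simp only [mem_inter_iff, mem_Ioc, mem_Ioo, mem_Iio]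
          constructor
          · rintro ⟨⟨h1, _⟩, h3⟩; exact ⟨h1, h3⟩
          · rintro ⟨h1, h2⟩; exact ⟨⟨h1, le_trans h2.le hω.2⟩, h2⟩
        rw [hset]
        simp [Real.volume_Ioo, ENNReal.toReal_ofReal hω.1, hω.1]
      rw [h2]
  · -- direction 2
    rintro r ⟨U, hUmeas, hUanti, hUval, hUint, hUX, rfl⟩
    set V : Ωs → ℝ := fun ω => ∫ t in Ioc (0:ℝ) 1, U t ω with hVdef
    have hUt : ∀ t, Measurable fun ω => U t ω :=
      fun t => hUmeas.comp measurable_prodMk_left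
    have hVmeas : Measurable V := by
      have hsm : StronglyMeasurable (Function.uncurry (fun ω t => U t ω)) :=
        (hUmeas.comp measurable_swap).stronglyMeasurable
      exact hsm.integral_prod_right.measurable
    have hone_int : IntegrableOn (fun _ : ℝ => (1:ℝ)) (Ioc (0:ℝ) 1) volume :=
      (integrableOn_const_iff (C := (1:ℝ))).mpr (Or.inr (by simp))
    have hslice_int : ∀ ω, IntegrableOn (fun t => U t ω) (Ioc (0:ℝ) 1) volume := by
      intro ω
      refine hone_int.mono'
        ((hUmeas.comp (measurable_id.prodMk measurable_const)).aestronglyMeasurable) ?_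
      filter_upwards [ae_restrict_mem measurableSet_Ioc] with t ht
      rcases hUval t ⟨ht.1.le, ht.2⟩ ω with h | h <;> simp [h]
    have hV01 : ∀ ω, V ω ∈ Icc (0:ℝ) 1 := by
      intro ω
      constructor
      · refine setIntegral_nonneg measurableSet_Ioc (fun t ht => ?_)
        rcases hUval t ⟨ht.1.le, ht.2⟩ ω with h | h <;> simp [h]
      · have := setIntegral_mono_on (hslice_int ω) hone_int measurableSet_Ioc
          (fun t ht => by rcases hUval t ⟨ht.1.le, ht.2⟩ ω with h | h <;> simp [h])
        simpa using this
    set A : ℝ → Set Ωs := fun t => {ω | U t ω = 1} with hAdef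
    have hA : ∀ t, MeasurableSet (A t) := fun t => (hUt t) (measurableSet_singleton 1)
    have hUind : ∀ t ∈ Icc (0:ℝ) 1, (fun ω => U t ω) = (A t).indicator 1 := by
      intro t ht
      funext ω
      rcases hUval t ht ω with h | h
      · have hnm : ω ∉ A t := by simp [hAdef, h]
        rw [Set.indicator_of_notMem hnm, h]
      · have hmm : ω ∈ A t := h
        simp [Set.indicator_of_mem hmm, h]
    have hPA : ∀ t ∈ Icc (0:ℝ) 1, P (A t) = ENNReal.ofReal (1 - t) := by
      intro t ht
      have h1 : (P (A t)).toReal = 1 - t := by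
        rw [← measureReal_def, ← integral_indicator_one (hA t), ← hUind t ht]
        exact hUint t ht
      rw [← h1, ENNReal.ofReal_toReal (measure_ne_top P _)]
    -- indicator integral helper
    have hind_int : ∀ t : ℝ, IntegrableOn ((Ioc (0:ℝ) t).indicator fun _ => (1:ℝ))
        (Ioc (0:ℝ) 1) volume := fun t => hone_int.indicator measurableSet_Ioc
    have hind_val : ∀ t ∈ Icc (0:ℝ) 1,
        ∫ s in Ioc (0:ℝ) 1, (Ioc (0:ℝ) t).indicator (fun _ => (1:ℝ)) s = t := by
      intro t ht
      rw [setIntegral_indicator measurableSet_Ioc,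
        Set.inter_eq_self_of_subset_right (Ioc_subset_Ioc_right ht.2)]
      simp [Real.volume_Ioc, ENNReal.toReal_ofReal ht.1, ht.1]
    have hsub1 : ∀ t ∈ Icc (0:ℝ) 1, V ⁻¹' Ioi t ⊆ A t := by
      intro t ht ω hω
      by_contra hc
      have hU0 : U t ω = 0 := (hUval t ht ω).resolve_right hc
      have hb : V ω ≤ ∫ s in Ioc (0:ℝ) 1, (Ioc (0:ℝ) t).indicator (fun _ => (1:ℝ)) s := by
        refine setIntegral_mono_on (hslice_int ω) (hind_int t) measurableSet_Ioc ?_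
        intro s hs
        by_cases hst : s ≤ t
        · rw [Set.indicator_of_mem (Set.mem_Ioc.mpr ⟨hs.1, hst⟩)]
          rcases hUval s ⟨hs.1.le, hs.2⟩ ω with h | h <;> simp [h]
        · push_neg at hst
          rw [Set.indicator_of_notMem (fun h => absurd h.2 (not_le.mpr hst))]
          have hle : U s ω ≤ U t ω := hUanti ω ht ⟨hs.1.le, hs.2⟩ hst.le
          rw [hU0] at hle
          exact hle
      rw [hind_val t ht] at hb
      exact absurd hω (by simpa using not_lt.mpr hb)
    have hsub2 : ∀ t ∈ Icc (0:ℝ) 1, A t ⊆ {ω | t ≤ V ω} := by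
      intro t ht ω hω
      have hU1 : U t ω = 1 := hω
      have hb : ∫ s in Ioc (0:ℝ) 1, (Ioc (0:ℝ) t).indicator (fun _ => (1:ℝ)) s ≤ V ω := by
        refine setIntegral_mono_on (hind_int t) (hslice_int ω) measurableSet_Ioc ?_
        intro s hs
        by_cases hst : s ≤ t
        · rw [Set.indicator_of_mem (Set.mem_Ioc.mpr ⟨hs.1, hst⟩)]
          have := hUanti ω ⟨hs.1.le, hs.2⟩ ht hst
          simpa [hU1] using this
        · push_neg at hst
          rw [Set.indicator_of_notMem (fun h => absurd h.2 (not_le.mpr hst))]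
          rcases hUval s ⟨hs.1.le, hs.2⟩ ω with h | h <;> simp [h]
      rw [hind_val t ht] at hb
      exact hb
    have hVtop : ∀ a ∈ Ico (0:ℝ) 1, P (V ⁻¹' Ioi a) = ENNReal.ofReal (1 - a) := by
      intro a ha
      refine le_antisymm ?_ ?_
      · calc P (V ⁻¹' Ioi a) ≤ P (A a) := measure_mono (hsub1 a ⟨ha.1, ha.2.le⟩)
          _ = ENNReal.ofReal (1 - a) := hPA a ⟨ha.1, ha.2.le⟩
      · set sn : ℕ → ℝ := fun n => a + (1 - a) / (n + 1) with hsndef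
        have hsn_mem : ∀ n : ℕ, sn n ∈ Icc (0:ℝ) 1 ∧ a < sn n := by
          intro n
          have hn : (0:ℝ) < (n:ℝ) + 1 := by positivity
          have h1a : (0:ℝ) < 1 - a := by linarith [ha.2]
          have hpos : (0:ℝ) < (1 - a) / (n + 1) := by positivity
          have hle : (1 - a) / (n + 1) ≤ 1 - a := by
            rw [div_le_iff₀ hn]
            nlinarith
          refine ⟨⟨?_, ?_⟩, ?_⟩ <;> simp only [hsndef] <;> [linarith [ha.1]; linarith; linarith]
        have hstep : ∀ n : ℕ, ENNReal.ofReal (1 - sn n) ≤ P (V ⁻¹' Ioi a) := by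
          intro n
          calc ENNReal.ofReal (1 - sn n) = P (A (sn n)) := (hPA _ (hsn_mem n).1).symm
            _ ≤ P {ω | sn n ≤ V ω} := measure_mono (hsub2 _ (hsn_mem n).1)
            _ ≤ P (V ⁻¹' Ioi a) :=
              measure_mono (fun ω h => lt_of_lt_of_le (hsn_mem n).2 h)
        have hlim : Filter.Tendsto (fun n : ℕ => ENNReal.ofReal (1 - sn n)) Filter.atTop
            (nhds (ENNReal.ofReal (1 - a))) := by
          refine (ENNReal.continuous_ofReal.tendsto _).comp ?_
          have h0 : Filter.Tendsto (fun n : ℕ => (1 - a) / ((n:ℝ) + 1)) Filter.atTop (nhds 0) := by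
            have h0' := (tendsto_const_div_atTop_nhds_zero_nat (1 - a)).comp
              (Filter.tendsto_add_atTop_nat 1)
            have heq : (fun n : ℕ => (1 - a) / (((n + 1 : ℕ)):ℝ)) =
                (fun n : ℕ => (1 - a) / ((n:ℝ) + 1)) := by
              funext n; push_cast; ring
            rwa [Function.comp_def, heq] at h0'
          have h1 : Filter.Tendsto sn Filter.atTop (nhds a) := by
            have := h0.const_add a
            simpa [hsndef] using this
          have := h1.const_sub 1
          simpa using this
        exact le_of_tendsto hlim (Filter.Eventually.of_forall hstep)
    haveI hmap_prob : IsProbabilityMeasure (Measure.map V P) :=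
      Measure.isProbabilityMeasure_map hVmeas.aemeasurable
    have hVlaw : Measure.map V P = volume.restrict (Icc (0:ℝ) 1) := by
      refine Measure.ext_of_Iic _ _ (fun a => ?_)
      rw [Measure.map_apply hVmeas measurableSet_Iic,
        Measure.restrict_apply measurableSet_Iic]
      rcases lt_or_ge a 0 with h | h
      · have h1 : V ⁻¹' Iic a = ∅ :=
          eq_empty_iff_forall_notMem.mpr fun ω hω =>
            absurd (le_trans (hV01 ω).1 hω) (not_le.mpr h)
        have h2 : Iic a ∩ Icc (0:ℝ) 1 = ∅ :=
          eq_empty_iff_forall_notMem.mpr fun x hx =>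
            absurd (le_trans hx.2.1 hx.1) (not_le.mpr h)
        rw [h1, h2, measure_empty, measure_empty]
      · rcases lt_or_ge a 1 with h1 | h1
        · have hIoi := hVtop a ⟨h, h1⟩
          have hcompl : V ⁻¹' Iic a = (V ⁻¹' Ioi a)ᶜ := by
            ext ω; simp [not_lt]
          rw [hcompl, measure_compl (hVmeas measurableSet_Ioi) (measure_ne_top _ _), hIoi,
            measure_univ]
          have h2 : Iic a ∩ Icc (0:ℝ) 1 = Icc 0 a := by
            ext x
            simp only [mem_inter_iff, mem_Iic, mem_Icc]
            constructor
            · rintro ⟨hx1, hx2, _⟩; exact ⟨hx2, hx1⟩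
            · rintro ⟨hx1, hx2⟩; exact ⟨hx2, hx1, le_trans hx2 h1.le⟩
          rw [h2, Real.volume_Icc]
          rw [← ENNReal.ofReal_one, ← ENNReal.ofReal_sub _ (by linarith : (0:ℝ) ≤ 1 - a)]
          norm_num
        · have hu : V ⁻¹' Iic a = univ :=
            eq_univ_of_forall fun ω => le_trans (hV01 ω).2 h1
          have h2 : Iic a ∩ Icc (0:ℝ) 1 = Icc 0 1 :=
            Set.inter_eq_self_of_subset_right (fun x hx => le_trans hx.2 h1)
          rw [hu, h2, measure_univ, Real.volume_Icc]
          norm_num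
    have hkey : ∀ a : ℝ, ∫ ω in V ⁻¹' Ioi a, X ω ∂P = 0 := by
      intro a
      rcases lt_or_ge a 0 with h | h
      · have hu : V ⁻¹' Ioi a = univ :=
          eq_univ_of_forall fun ω => lt_of_lt_of_le h (hV01 ω).1
        rw [hu, Measure.restrict_univ]
        exact hXcentered
      · rcases lt_or_ge a 1 with h1 | h1
        · have hAeq : V ⁻¹' Ioi a =ᵐ[P] A a := by
            have hsub := hsub1 a ⟨h, h1.le⟩
            have hmeq : P (A a) ≤ P (V ⁻¹' Ioi a) := by
              rw [hPA a ⟨h, h1.le⟩, hVtop a ⟨h, h1⟩]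
            exact ae_eq_of_subset_of_measure_ge hsub hmeq
              (hVmeas measurableSet_Ioi).nullMeasurableSet (measure_ne_top _ _)
          rw [setIntegral_congr_set hAeq, ← integral_indicator (hA a)]
          rw [← hUX a ⟨h, h1.le⟩]
          refine integral_congr_ae (Filter.Eventually.of_forall fun ω => ?_)
          rcases hUval a ⟨h, h1.le⟩ ω with hh | hh
          · have : ω ∉ A a := by simp [hAdef, hh]
            simp [Set.indicator_of_notMem this, hh]
          · have : ω ∈ A a := hh
            simp [Set.indicator_of_mem this, hh]
        · have hu : V ⁻¹' Ioi a = ∅ :=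
            eq_empty_iff_forall_notMem.mpr fun ω hω =>
              absurd (lt_of_le_of_lt (le_trans (hV01 ω).2 h1) hω) (lt_irrefl _)
          rw [hu, Measure.restrict_empty, integral_zero_measure]
    have hallB : ∀ B : Set ℝ, MeasurableSet B → ∫ ω in V ⁻¹' B, X ω ∂P = 0 := by
      have hgen : (inferInstance : MeasurableSpace ℝ) =
          MeasurableSpace.generateFrom (Set.range Ioi) :=
        BorelSpace.measurable_eq.trans (borel_eq_generateFrom_Ioi ℝ)
      refine MeasurableSpace.induction_on_inter hgen isPiSystem_Ioi ?_ ?_ ?_ ?_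
      · simp
      · rintro t ⟨a, rfl⟩
        exact hkey a
      · intro t ht hC
        have hadd := integral_add_compl (hVmeas ht) intX
        rw [hC, hXcentered, zero_add] at hadd
        rw [Set.preimage_compl]
        exact hadd
      · intro f hd hf hC
        rw [Set.preimage_iUnion,
          integral_iUnion (fun i => hVmeas (hf i))
            (fun i j hij => Disjoint.preimage V (hd hij)) intX.integrableOn]
        simp [hC]
    have hm : MeasurableSpace.comap V inferInstance ≤ (inferInstance : MeasurableSpace Ωs) :=
      hVmeas.comap_le
    haveI : SigmaFinite (P.trim hm) := by
      have : IsFiniteMeasure (P.trim hm) := isFiniteMeasure_trim hm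
      infer_instance
    have hce : P[X | MeasurableSpace.comap V inferInstance] =ᵐ[P] 0 := by
      refine (ae_eq_condExp_of_forall_setIntegral_eq hm intX ?_ ?_ ?_).symm
      · intro s _ _; exact integrableOn_zero
      · rintro s ⟨B, hB, rfl⟩ _
        rw [hallB B hB]
        simp
      · exact ⟨fun _ => 0, stronglyMeasurable_const, Filter.EventuallyEq.rfl⟩
    refine ⟨V, hVmeas, hVlaw, hce, ?_⟩
    refine integral_congr_ae (Filter.Eventually.of_forall fun ω => ?_)
    show (∫ t in (0:ℝ)..1, U t ω * Y ω) = V ω * Y ω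
    rw [intervalIntegral.integral_mul_const, intervalIntegral.integral_of_le zero_le_one]
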